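/- Let X be a real Banach space and P : X → ℝ a nonzero continuous 2-homogeneous polynomial which admits a k-dimensional P-maximal subspace M. If H ⊆ X is an m-dimensional linear subspace with P identically zero on H, then m ≤ k. -/

import Mathlib

/-- `P : X → ℝ` is an `n`-homogeneous polynomial: there is a symmetric `n`-linear form `A`
with `P x = A (x, …, x)`. -/
def IsHomogPoly {X : Type*} [NormedAddCommGroup X] [NormedSpace ℝ X]
    (n : ℕ) (P : X → ℝ) : Prop :=
  ∃ A : MultilinearMap ℝ (fun _ : Fin n => X) ℝ,
    (∀ (σ : Equiv.Perm (Fin n)) (v : Fin n → X), (A fun i => v (σ i)) = A v) ∧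
    ∀ x, P x = A fun _ => x

/-- `P` is a continuous `n`-homogeneous polynomial. -/
def IsContHomogPoly {X : Type*} [NormedAddCommGroup X] [NormedSpace ℝ X]
    (n : ℕ) (P : X → ℝ) : Prop :=
  IsHomogPoly n P ∧ ∃ C : ℝ, ∀ x, ‖P x‖ ≤ C * ‖x‖ ^ n

/-- `M` is a `P`-maximal subspace: a proper subspace on which `P` vanishes identically
and which is maximal among subspaces on which `P` vanishes. -/
def IsPMaximal {X : Type*} [NormedAddCommGroup X] [NormedSpace ℝ X]
    (P : X → ℝ) (M : Submodule ℝ X) : Prop :=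
  M ≠ ⊤ ∧ (∀ x ∈ M, P x = 0) ∧
    ∀ M₁ : Submodule ℝ X, M ≤ M₁ → (∀ x ∈ M₁, P x = 0) → M₁ = M

/-- If a nonzero continuous 2-homogeneous polynomial `P` on a real Banach space has a
`k`-dimensional `P`-maximal subspace `M`, then any `m`-dimensional subspace `H` on which
`P` vanishes identically satisfies `m ≤ k`. -/
theorem dim_le_of_pMaximal_finiteDim {X : Type*} [NormedAddCommGroup X] [NormedSpace ℝ X]
    [CompleteSpace X] (P : X → ℝ) (hP : IsContHomogPoly 2 P) (hP0 : P ≠ 0)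
    (k m : ℕ) (M : Submodule ℝ X) (hM : IsPMaximal P M)
    [FiniteDimensional ℝ M] (hMk : Module.finrank ℝ M = k)
    (H : Submodule ℝ X) [FiniteDimensional ℝ H] (hHm : Module.finrank ℝ H = m)
    (hH : ∀ x ∈ H, P x = 0) :
    m ≤ k := by
  obtain ⟨⟨A, hsym, hPA⟩, -⟩ := hP
  set B : X → X → ℝ := fun x y => A ![x, y] with hBdef
  have hvec : ∀ x : X, (fun _ : Fin 2 => x) = ![x, x] := by
    intro x; funext i; fin_cases i <;> rfl
  have hPB : ∀ x, P x = B x x := by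
    intro x; rw [hPA x, hvec x]
  have hBsymm : ∀ x y, B x y = B y x := by
    intro x y
    have h := hsym (Equiv.swap 0 1) ![y, x]
    have h2 : (fun i => ![y, x] (Equiv.swap 0 1 i)) = ![x, y] := by
      funext i; fin_cases i <;> simp
    rw [h2] at h
    exact h
  have hupd0 : ∀ (x y z : X), Function.update ![x, z] 0 y = ![y, z] := by
    intro x y z; funext i; fin_cases i <;> simp [Function.update]
  have hBaddl : ∀ x y z, B (x + y) z = B x z + B y z := by
    intro x y z
    have h := A.map_update_add ![x, z] 0 x y
    simp only [hupd0] at h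
    exact h
  have hBsmull : ∀ (c : ℝ) (x z : X), B (c • x) z = c * B x z := by
    intro c x z
    have h := A.map_update_smul ![x, z] 0 c x
    simp only [hupd0] at h
    simpa using h
  have hBaddr : ∀ x y z, B x (y + z) = B x y + B x z := by
    intro x y z; rw [hBsymm, hBaddl, hBsymm y x, hBsymm z x]
  have hBsmulr : ∀ (c : ℝ) (x z : X), B x (c • z) = c * B x z := by
    intro c x z; rw [hBsymm, hBsmull, hBsymm]
  have hexp : ∀ u v, P (u + v) = P u + B u v + B v u + P v := by
    intro u v
    rw [hPB, hPB, hPB, hBaddl, hBaddr, hBaddr]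
    ring
  -- B vanishes on any subspace where P vanishes
  have hBzero : ∀ (V : Submodule ℝ X), (∀ v ∈ V, P v = 0) →
      ∀ x ∈ V, ∀ y ∈ V, B x y = 0 := by
    intro V hV x hx y hy
    have h1 := hV x hx
    have h2 := hV y hy
    have h3 := hV (x + y) (V.add_mem hx hy)
    have h4 := hexp x y
    have h5 := hBsymm x y
    linarith
  -- key maximality consequence
  have hkey : ∀ x ∈ H, (∀ y ∈ M, B x y = 0) → x ∈ M := by
    intro x hx hxy
    have hall : ∀ z ∈ M ⊔ (ℝ ∙ x), P z = 0 := by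
      intro z hz
      rw [Submodule.mem_sup] at hz
      obtain ⟨mm, hmm, s, hs, rfl⟩ := hz
      obtain ⟨c, rfl⟩ := Submodule.mem_span_singleton.mp hs
      have h1 : P mm = 0 := hM.2.1 mm hmm
      have h2 : P x = 0 := hH x hx
      have h3 : B x mm = 0 := hxy mm hmm
      have h4 : B mm x = 0 := by rw [hBsymm]; exact h3
      have h5 : P (c • x) = c * (c * P x) := by
        rw [hPB, hPB, hBsmull, hBsmulr]
      rw [hexp, hBsmulr, hBsmull, h5, h1, h2, h3, h4]
      ring
    have heq := hM.2.2 _ le_sup_left hall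
    have hx2 : x ∈ M ⊔ (ℝ ∙ x) :=
      Submodule.mem_sup_right (Submodule.mem_span_singleton_self x)
    rwa [heq] at hx2
  -- bilinear map packaging
  let Bl : X →ₗ[ℝ] X →ₗ[ℝ] ℝ := LinearMap.mk₂ ℝ B hBaddl hBsmull hBaddr hBsmulr
  let L0 : H →ₗ[ℝ] M →ₗ[ℝ] ℝ := (Bl.comp H.subtype).compl₂ M.subtype
  have hL0 : ∀ (h : H) (mm : M), L0 h mm = B h mm := fun _ _ => rfl
  let N : Submodule ℝ M := (H ⊓ M).comap M.subtype
  have hle : ∀ h : H, N ≤ LinearMap.ker (L0 h) := by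
    intro h n hn
    have hn' : (n : X) ∈ H ⊓ M := hn
    simp only [LinearMap.mem_ker]
    rw [hL0]
    exact hBzero H hH h h.2 n hn'.1
  let L : H →ₗ[ℝ] ((M ⧸ N) →ₗ[ℝ] ℝ) :=
    { toFun := fun h => N.liftQ (L0 h) (hle h)
      map_add' := by
        intro a b
        refine Submodule.linearMap_qext N ?_
        ext mm
        simp [Submodule.liftQ_apply, map_add]
      map_smul' := by
        intro c a
        refine Submodule.linearMap_qext N ?_
        ext mm
        simp [Submodule.liftQ_apply, map_smul] }
  have hkerL : LinearMap.ker L = (H ⊓ M).comap H.subtype := by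
    ext h
    simp only [LinearMap.mem_ker, Submodule.mem_comap]
    constructor
    · intro hh
      refine ⟨h.2, ?_⟩
      apply hkey h h.2
      intro y hy
      have : L h (N.mkQ ⟨y, hy⟩) = 0 := by rw [hh]; rfl
      have h2 : L h (N.mkQ ⟨y, hy⟩) = B h y := by
        rfl
      rw [h2] at this
      exact this
    · intro hh
      refine Submodule.linearMap_qext N ?_
      ext mm
      show L0 h mm = 0
      rw [hL0]
      exact hBzero M hM.2.1 h hh.2 mm mm.2
  -- dimension count
  have e1 := LinearMap.finrank_range_add_finrank_ker L
  have e2 : Module.finrank ℝ (LinearMap.ker L) = Module.finrank ℝ (H ⊓ M : Submodule ℝ X) := by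
    rw [hkerL]
    exact (Submodule.comapSubtypeEquivOfLe (inf_le_left : H ⊓ M ≤ H)).finrank_eq
  have e3 : Module.finrank ℝ N = Module.finrank ℝ (H ⊓ M : Submodule ℝ X) :=
    (Submodule.comapSubtypeEquivOfLe (inf_le_right : H ⊓ M ≤ M)).finrank_eq
  have e4 : Module.finrank ℝ (M ⧸ N) + Module.finrank ℝ N = Module.finrank ℝ M :=
    Submodule.finrank_quotient_add_finrank N
  have e5 : Module.finrank ℝ (LinearMap.range L) ≤
      Module.finrank ℝ ((M ⧸ N) →ₗ[ℝ] ℝ) := Submodule.finrank_le _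
  have e6 : Module.finrank ℝ ((M ⧸ N) →ₗ[ℝ] ℝ) = Module.finrank ℝ (M ⧸ N) :=
    Subspace.dual_finrank_eq
  omega
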